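/- arXiv:1001.3923 — 2 statements merged into one kernel-verified Lean document; each statement's English description precedes it below -/
import Mathlib

section
/- Let G = ℝ² \ {(−1,0), (1,0)} (equivalently ℂ \ {−1,1}) and let x = (0,√3). Then j_G(x, (0,−√3)) = log(1+√3), and for every h ∈ ℝ one has j_G(x, (h,−1)) ≥ log(29/10). -/
/-- The distance ratio metric (`j`-metric) of a domain `G`:
`j_G(x,y) = log (1 + |x-y| / min (d(x), d(y)))` where `d` is the distance to `∂G`. -/
noncomputable def jDist {E : Type*} [NormedAddCommGroup E] (G : Set E) (x y : E) : ℝ :=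
  Real.log (1 + dist x y / min (Metric.infDist x (frontier G)) (Metric.infDist y (frontier G)))

/-- The `j`-metric ball `B_j(x,r) = {y ∈ G : j_G(x,y) < r}`. -/
def jBall {E : Type*} [NormedAddCommGroup E] (G : Set E) (x : E) (r : ℝ) : Set E :=
  {y ∈ G | jDist G x y < r}

lemma infDist_pair' {E : Type*} [MetricSpace E] (x a b : E) :
    Metric.infDist x {a, b} = min (dist x a) (dist x b) := by
  have h : ({a, b} : Set E) = {a} ∪ {b} := rfl
  rw [Metric.infDist, h, EMetric.infEdist_union, EMetric.infEdist_singleton,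
    EMetric.infEdist_singleton, ENNReal.toReal_min (edist_ne_top _ _) (edist_ne_top _ _),
    ← dist_edist, ← dist_edist]

lemma frontier_pair_compl {E : Type*} [NormedAddCommGroup E] [NormedSpace ℝ E] [Nontrivial E]
    (a b : E) : frontier ({a, b} : Set E)ᶜ = {a, b} := by
  rw [frontier_compl]
  have hd : Dense (({a, b} : Set E)ᶜ) :=
    Set.Countable.dense_compl ℝ ((Set.toFinite _).countable)
  have hint : interior ({a, b} : Set E) = ∅ := interior_eq_empty_iff_dense_compl.2 hd
  rw [(Set.Finite.isClosed (Set.toFinite _)).frontier_eq, hint]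
  simp

lemma sqrtMono : Monotone Real.sqrt := fun _ _ hab => Real.sqrt_le_sqrt hab

lemma dist2 (a b : EuclideanSpace ℝ (Fin 2)) :
    dist a b = Real.sqrt ((a 0 - b 0)^2 + (a 1 - b 1)^2) := by
  rw [EuclideanSpace.dist_eq]
  simp [Fin.sum_univ_two, Real.dist_eq, sq_abs]

set_option maxHeartbeats 1600000 in
/-- Klén, Remark 2.5 (1): in `G = ℝ² \ {(-1,0), (1,0)}` with `x = (0,√3)` one has
`j_G(x, (0,-√3)) = log (1+√3)`, while every point `z = (h,-1)` on the horizontal line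
of height `-1` satisfies `j_G(x,z) ≥ log (29/10)`. -/
theorem jDist_twice_punctured_plane
    (e₀ e₁ x y : EuclideanSpace ℝ (Fin 2)) (G : Set (EuclideanSpace ℝ (Fin 2)))
    (he₀ : e₀ = EuclideanSpace.single 0 1) (he₁ : e₁ = EuclideanSpace.single 1 1)
    (hG : G = ({-e₀, e₀} : Set (EuclideanSpace ℝ (Fin 2)))ᶜ)
    (hx : x = Real.sqrt 3 • e₁) (hy : y = -(Real.sqrt 3) • e₁) :
    jDist G x y = Real.log (1 + Real.sqrt 3)
      ∧ ∀ h : ℝ, Real.log (29 / 10) ≤ jDist G x (h • e₀ - e₁) := by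
  have hs0 : (0:ℝ) ≤ Real.sqrt 3 := Real.sqrt_nonneg 3
  have hs2 : Real.sqrt 3 ^ 2 = 3 := Real.sq_sqrt (by norm_num)
  have hslb : (173/100 : ℝ) ≤ Real.sqrt 3 := by
    rw [show (173/100:ℝ) = Real.sqrt ((173/100)^2) by
      rw [Real.sqrt_sq (by norm_num)]]
    exact Real.sqrt_le_sqrt (by norm_num)
  have hsub : Real.sqrt 3 ≤ 2 := by
    rw [show (2:ℝ) = Real.sqrt (2^2) by rw [Real.sqrt_sq (by norm_num)]]
    exact Real.sqrt_le_sqrt (by norm_num)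
  -- coordinates
  have hx0 : x 0 = 0 := by simp [hx, he₁, EuclideanSpace.single_apply]
  have hx1 : x 1 = Real.sqrt 3 := by simp [hx, he₁, EuclideanSpace.single_apply]
  have hy0 : y 0 = 0 := by simp [hy, he₁, EuclideanSpace.single_apply]
  have hy1 : y 1 = -Real.sqrt 3 := by simp [hy, he₁, EuclideanSpace.single_apply]
  have he00 : e₀ 0 = 1 := by simp [he₀, EuclideanSpace.single_apply]
  have he01 : e₀ 1 = 0 := by simp [he₀, EuclideanSpace.single_apply]
  have hfr : frontier G = {-e₀, e₀} := by rw [hG]; exact frontier_pair_compl _ _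
  -- distances from x
  have hdx : Metric.infDist x (frontier G) = 2 := by
    rw [hfr, infDist_pair', dist2, dist2]
    simp only [PiLp.neg_apply, hx0, hx1, he00, he01]
    rw [show (0 - -(1:ℝ))^2 + (Real.sqrt 3 - -0)^2 = 4 by linear_combination hs2,
      show (0 - (1:ℝ))^2 + (Real.sqrt 3 - 0)^2 = 4 by linear_combination hs2]
    rw [show (4:ℝ) = 2^2 by norm_num, Real.sqrt_sq (by norm_num)]
    simp
  constructor
  · -- first part
    have hdy : Metric.infDist y (frontier G) = 2 := by
      rw [hfr, infDist_pair', dist2, dist2]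
      simp only [PiLp.neg_apply, hy0, hy1, he00, he01]
      rw [show (0 - -(1:ℝ))^2 + (-Real.sqrt 3 - -0)^2 = 4 by linear_combination hs2,
        show (0 - (1:ℝ))^2 + (-Real.sqrt 3 - 0)^2 = 4 by linear_combination hs2]
      rw [show (4:ℝ) = 2^2 by norm_num, Real.sqrt_sq (by norm_num)]
      simp
    have hdxy : dist x y = 2 * Real.sqrt 3 := by
      rw [dist2]
      simp only [hx0, hx1, hy0, hy1]
      rw [show (0 - (0:ℝ))^2 + (Real.sqrt 3 - -Real.sqrt 3)^2 = (2*Real.sqrt 3)^2 by ring,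
        Real.sqrt_sq (by positivity)]
    rw [jDist, hdx, hdy, hdxy]
    norm_num
  · -- second part
    intro h
    set z := h • e₀ - e₁ with hz
    have hz0 : z 0 = h := by simp [hz, he₀, he₁, EuclideanSpace.single_apply]
    have hz1 : z 1 = -1 := by simp [hz, he₀, he₁, EuclideanSpace.single_apply]
    have hdxz : dist x z = Real.sqrt (h^2 + (Real.sqrt 3 + 1)^2) := by
      rw [dist2]
      simp only [hx0, hx1, hz0, hz1]
      congr 1
      ring
    have hdz : Metric.infDist z (frontier G)
        = Real.sqrt (min ((h+1)^2 + 1) ((h-1)^2 + 1)) := by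
      rw [hfr, infDist_pair', dist2, dist2]
      simp only [PiLp.neg_apply, hz0, hz1, he00, he01]
      rw [show (h - -(1:ℝ))^2 + (-1 - -0)^2 = (h+1)^2+1 by ring,
        show (h - (1:ℝ))^2 + (-1 - 0)^2 = (h-1)^2+1 by ring]
      exact (sqrtMono.map_min).symm
    rw [jDist, hdx, hdz]
    have h2eq : (2:ℝ) = Real.sqrt 4 := by
      rw [show (4:ℝ) = 2^2 by norm_num, Real.sqrt_sq (by norm_num)]
    set M := min (4:ℝ) (min ((h+1)^2 + 1) ((h-1)^2 + 1)) with hM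
    have hmin : min (2:ℝ) (Real.sqrt (min ((h+1)^2 + 1) ((h-1)^2 + 1))) = Real.sqrt M := by
      rw [h2eq, hM]
      exact (sqrtMono.map_min).symm
    rw [hmin]
    have hMpos : 0 < M := by
      rw [hM]
      refine lt_min (by norm_num) (lt_min (by positivity) (by positivity))
    have hcore : (361/100) * M ≤ h^2 + (Real.sqrt 3 + 1)^2 := by
      rcases le_total (4:ℝ) (min ((h+1)^2 + 1) ((h-1)^2 + 1)) with hc | hc
      · have hMeq : M = 4 := min_eq_left hc
        have h1 : (3:ℝ) ≤ (h+1)^2 := by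
          have := le_trans hc (min_le_left _ _); linarith
        have h2 : (3:ℝ) ≤ (h-1)^2 := by
          have := le_trans hc (min_le_right _ _); linarith
        rw [hMeq]
        nlinarith [sq_nonneg (h - 1 - Real.sqrt 3), sq_nonneg (h + 1 + Real.sqrt 3),
          sq_nonneg h, mul_nonneg hs0 hs0]
      · have hMeq : M = min ((h+1)^2 + 1) ((h-1)^2 + 1) := min_eq_right hc
        rcases le_total ((h+1)^2 + 1) ((h-1)^2 + 1) with hc2 | hc2
        · have hMeq2 : M = (h+1)^2 + 1 := by rw [hMeq, min_eq_left hc2]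
          have hh : h ≤ 0 := by nlinarith
          have hb : (h+1)^2 ≤ 3 := by
            rw [min_eq_left hc2] at hc; linarith
          rw [hMeq2]
          nlinarith [sq_nonneg (h+1), mul_nonneg (neg_nonneg.2 hh) hs0]
        · have hMeq2 : M = (h-1)^2 + 1 := by rw [hMeq, min_eq_right hc2]
          have hh : 0 ≤ h := by nlinarith
          have hb : (h-1)^2 ≤ 3 := by
            rw [min_eq_right hc2] at hc; linarith
          rw [hMeq2]
          nlinarith [sq_nonneg (h-1), mul_nonneg hh hs0]
    have hkey : (19/10 : ℝ) * Real.sqrt M ≤ Real.sqrt (h^2 + (Real.sqrt 3 + 1)^2) := by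
      rw [show (19/10 : ℝ) = Real.sqrt ((19/10)^2) by rw [Real.sqrt_sq (by norm_num)],
        ← Real.sqrt_mul (by norm_num)]
      exact Real.sqrt_le_sqrt (by nlinarith)
    have hsqrtMpos : 0 < Real.sqrt M := Real.sqrt_pos.2 hMpos
    apply Real.log_le_log (by norm_num)
    rw [hdxz]
    have h19 : (19/10:ℝ) ≤ Real.sqrt (h^2 + (Real.sqrt 3 + 1)^2) / Real.sqrt M :=
      (le_div_iff₀ hsqrtMpos).2 (by linarith)
    linarith
end

section
/- Let r ∈ (2,π], and for s ∈ (−r,r) set φ(s) = √(r²−s²), a(s) = φ(s)·cos φ(s) + s·sin φ(s) and b(s) = φ(s)·sin φ(s) − s·cos φ(s). Then b is differentiable on (−r,r) with b'(s) = −(1+s)·a(s)/φ(s), a(s) < 0 for all s ∈ (−r,0), and consequently b'(s) = 0 for s ∈ (−r,0) if and only if s = −1. -/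
/-- Klén, proof of Theorem 3.2: for `r ∈ (2,π]`, with `φ(s) = √(r²-s²)`,
`a(s) = φ(s) cos φ(s) + s sin φ(s)` and `b(s) = φ(s) sin φ(s) - s cos φ(s)`,
the function `b` has derivative `b'(s) = -(1+s) a(s)/φ(s)` on `(-r,r)`,
`a(s) < 0` on `(-r,0)`, and hence `b'(s) = 0` for `s ∈ (-r,0)` iff `s = -1`. -/
theorem tangent_vector_derivative (r : ℝ) (hr : r ∈ Set.Ioc 2 Real.pi)
    (φ a b : ℝ → ℝ)
    (hφ : ∀ s, φ s = Real.sqrt (r ^ 2 - s ^ 2))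
    (ha : ∀ s, a s = φ s * Real.cos (φ s) + s * Real.sin (φ s))
    (hb : ∀ s, b s = φ s * Real.sin (φ s) - s * Real.cos (φ s)) :
    (∀ s ∈ Set.Ioo (-r) r, HasDerivAt b (-(1 + s) * a s / φ s) s)
      ∧ (∀ s ∈ Set.Ioo (-r) 0, a s < 0)
      ∧ (∀ s ∈ Set.Ioo (-r) 0, (-(1 + s) * a s / φ s = 0 ↔ s = -1)) := by
  obtain ⟨hr2, hrpi⟩ := hr
  have hrpos : (0:ℝ) < r := by linarith
  -- φ is positive on (-r, r)
  have hφpos : ∀ s ∈ Set.Ioo (-r) r, 0 < φ s := by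
    intro s hs
    rw [hφ]
    apply Real.sqrt_pos.mpr
    nlinarith [hs.1, hs.2]
  -- the derivative statement
  have hderiv : ∀ s ∈ Set.Ioo (-r) r, HasDerivAt b (-(1 + s) * a s / φ s) s := by
    intro s hs
    have hφs : 0 < φ s := hφpos s hs
    have hu : 0 < r ^ 2 - s ^ 2 := by nlinarith [hs.1, hs.2]
    have hune : r ^ 2 - s ^ 2 ≠ 0 := ne_of_gt hu
    have hφne : φ s ≠ 0 := ne_of_gt hφs
    have hinner : HasDerivAt (fun x : ℝ => r ^ 2 - x ^ 2) (-(2 * s)) s := by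
      have := (hasDerivAt_const s (r ^ 2)).sub (hasDerivAt_pow 2 s)
      exact this.congr_deriv (by simp)
    have hsqrt : HasDerivAt (fun x : ℝ => Real.sqrt (r ^ 2 - x ^ 2))
        (1 / (2 * Real.sqrt (r ^ 2 - s ^ 2)) * -(2 * s)) s :=
      (Real.hasDerivAt_sqrt hune).comp s hinner
    have hφd : HasDerivAt φ (-s / φ s) s := by
      have hfun : φ = fun x : ℝ => Real.sqrt (r ^ 2 - x ^ 2) := funext hφ
      rw [hfun]
      have hsne : Real.sqrt (r ^ 2 - s ^ 2) ≠ 0 := hφ s ▸ hφne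
      convert hsqrt using 1
      show -s / Real.sqrt (r ^ 2 - s ^ 2) = 1 / (2 * Real.sqrt (r ^ 2 - s ^ 2)) * -(2 * s)
      field_simp
    have hsin : HasDerivAt (fun x => Real.sin (φ x)) (Real.cos (φ s) * (-s / φ s)) s :=
      (Real.hasDerivAt_sin (φ s)).comp s hφd
    have hcos : HasDerivAt (fun x => Real.cos (φ x)) (-Real.sin (φ s) * (-s / φ s)) s :=
      (Real.hasDerivAt_cos (φ s)).comp s hφd
    have h1 := hφd.mul hsin
    have h2 := (hasDerivAt_id s).mul hcos
    have h3 := h1.sub h2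
    have hfb : b = fun x => φ x * Real.sin (φ x) - x * Real.cos (φ x) := funext hb
    rw [hfb]
    refine HasDerivAt.congr_deriv (f := fun x => φ x * Real.sin (φ x) - x * Real.cos (φ x)) h3 ?_
    rw [ha, id]
    field_simp
    ring
  -- a < 0 on (-r, 0)
  have haneg : ∀ s ∈ Set.Ioo (-r) 0, a s < 0 := by
    intro s hs
    have hs0 : s < 0 := hs.2
    have hsr : -r < s := hs.1
    have hsIoo : s ∈ Set.Ioo (-r) r := ⟨hsr, by linarith⟩
    have hφs : 0 < φ s := hφpos s hsIoo
    have hφle : φ s ≤ Real.pi := by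
      rw [hφ]
      calc Real.sqrt (r ^ 2 - s ^ 2) ≤ Real.sqrt (r ^ 2) := by
            apply Real.sqrt_le_sqrt; nlinarith [sq_nonneg s]
        _ = r := by rw [Real.sqrt_sq hrpos.le]
        _ ≤ Real.pi := hrpi
    have hφsq : φ s ^ 2 = r ^ 2 - s ^ 2 := by
      rw [hφ, Real.sq_sqrt (by nlinarith [hs.1])]
    rw [ha]
    by_cases hhalf : φ s < Real.pi / 2
    · -- then s < -1 and use φ < tan φ
      have hpi : Real.pi < 3.15 := Real.pi_lt_d2
      have hs1 : s < -1 := by nlinarith [hφsq, Real.pi_gt_three]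
      have hcospos : 0 < Real.cos (φ s) := Real.cos_pos_of_mem_Ioo
        ⟨by linarith [Real.pi_pos], hhalf⟩
      have htan : φ s < Real.tan (φ s) := Real.lt_tan hφs hhalf
      have hsin : Real.sin (φ s) = Real.tan (φ s) * Real.cos (φ s) := by
        rw [Real.tan_eq_sin_div_cos]
        field_simp
      have h4 : s * Real.tan (φ s) < s * φ s := by nlinarith
      rw [hsin]
      nlinarith [mul_lt_mul_of_pos_left h4 hcospos, mul_pos hcospos hφs]
    · push_neg at hhalf
      have hcosnp : Real.cos (φ s) ≤ 0 :=
        Real.cos_nonpos_of_pi_div_two_le_of_le hhalf (by linarith)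
      rcases lt_or_eq_of_le hφle with hlt | heq
      · have hsinpos : 0 < Real.sin (φ s) := Real.sin_pos_of_pos_of_lt_pi hφs hlt
        nlinarith
      · rw [heq, Real.sin_pi, Real.cos_pi]
        nlinarith [Real.pi_pos]
  refine ⟨hderiv, haneg, ?_⟩
  intro s hs
  have hsIoo : s ∈ Set.Ioo (-r) r := ⟨hs.1, by linarith [hs.2]⟩
  have hφs : 0 < φ s := hφpos s hsIoo
  have has : a s < 0 := haneg s hs
  rw [div_eq_zero_iff]
  constructor
  · rintro (h | h)
    · rcases mul_eq_zero.mp h with h1 | h2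
      · linarith [neg_eq_zero.mp h1]
      · exact absurd h2 (ne_of_lt has)
    · exact absurd h (ne_of_gt hφs)
  · intro h
    left
    rw [h]
    ring
end
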